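/- Consider the feasible set S = {(W⁺, W⁻) : W⁺ ≥ 0, W⁻ ≥ 0, h(W⁺+W⁻) ≤ 0}. At any feasible point, the gradient of the constraint h(W⁺+W⁻) ≤ 0 (with respect to W⁺, equal to ∇h(A) where A = W⁺+W⁻) is a nonnegative linear combination of the gradients of those active nonnegativity constraints W⁺_{ij} ≥ 0 with (∇h(A))_{ij} > 0; in particular the gradients of the active constraints are linearly dependent, so no feasible point is regular. -/

import Mathlib

open Matrix

/-- `h(A) = Σ_{p=1}^d c_p tr(A^p)`. -/
noncomputable def hsum {d : ℕ} (c : ℕ → ℝ) (A : Matrix (Fin d) (Fin d) ℝ) : ℝ :=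
  ∑ p ∈ Finset.Icc 1 d, c p * (A ^ p).trace

/-- The gradient `∇h(A) = Σ_{p=1}^d p c_p (A^{p-1})ᵀ`. -/
noncomputable def gradh {d : ℕ} (c : ℕ → ℝ) (A : Matrix (Fin d) (Fin d) ℝ) :
    Matrix (Fin d) (Fin d) ℝ :=
  ∑ p ∈ Finset.Icc 1 d, ((p : ℝ) * c p) • (A ^ (p - 1))ᵀ

theorem stmt19 {d : ℕ} (c : ℕ → ℝ) (hc : ∀ p ∈ Finset.Icc 1 d, 0 < c p)
    (Wp Wm : Matrix (Fin d) (Fin d) ℝ)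
    (hWp : ∀ i j, 0 ≤ Wp i j) (hWm : ∀ i j, 0 ≤ Wm i j)
    (hfeas : hsum c (Wp + Wm) ≤ 0) :
    (∃ μ : Fin d × Fin d → ℝ, (∀ q, 0 ≤ μ q) ∧
      (∀ q, μ q ≠ 0 → 0 < gradh c (Wp + Wm) q.1 q.2) ∧
      (∀ q : Fin d × Fin d, 0 < gradh c (Wp + Wm) q.1 q.2 →
        Wp q.1 q.2 = 0 ∧ Wm q.1 q.2 = 0) ∧
      gradh c (Wp + Wm) =
        ∑ q : Fin d × Fin d, μ q • Matrix.single q.1 q.2 (1 : ℝ)) ∧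
    ¬ LinearIndependent ℝ
      (fun o : Option {q : Fin d × Fin d // 0 < gradh c (Wp + Wm) q.1 q.2} =>
        o.elim (gradh c (Wp + Wm))
          (fun q => Matrix.single q.1.1 q.1.2 (1 : ℝ))) := by
  classical
  set A := Wp + Wm with hA
  have hAnn : ∀ i j, 0 ≤ A i j := fun i j => add_nonneg (hWp i j) (hWm i j)
  have hpow : ∀ p i j, 0 ≤ (A ^ p) i j := by
    intro p
    induction p with
    | zero =>
      intro i j
      simp only [pow_zero, Matrix.one_apply]
      split <;> norm_num
    | succ n ih =>
      intro i j
      rw [pow_succ, Matrix.mul_apply]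
      exact Finset.sum_nonneg fun k _ => mul_nonneg (ih i k) (hAnn k j)
  -- each trace term is zero
  have hterm : ∀ p ∈ Finset.Icc 1 d, 0 ≤ c p * (A ^ p).trace := by
    intro p hp
    exact mul_nonneg (hc p hp).le
      (Finset.sum_nonneg fun i _ => hpow p i i)
  have hsum0 : hsum c A = 0 :=
    le_antisymm hfeas (Finset.sum_nonneg hterm)
  have htr0 : ∀ p ∈ Finset.Icc 1 d, (A ^ p).trace = 0 := by
    intro p hp
    have h := (Finset.sum_eq_zero_iff_of_nonneg hterm).mp hsum0 p hp
    rcases mul_eq_zero.mp h with h1 | h2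
    · exact absurd h1 (hc p hp).ne'
    · exact h2
  -- termwise: (A^(p-1)) j i * A i j = 0 for p in Icc 1 d
  have hprod : ∀ p ∈ Finset.Icc 1 d, ∀ i j, (A ^ (p - 1)) j i * A i j = 0 := by
    intro p hp i j
    obtain ⟨m, rfl⟩ : ∃ m, p = m + 1 := by
      have : 1 ≤ p := (Finset.mem_Icc.mp hp).1
      exact ⟨p - 1, (Nat.succ_pred_eq_of_pos this).symm⟩
    have htr : (A ^ (m + 1)).trace = ∑ k, ∑ l, (A ^ m) k l * A l k := by
      rw [pow_succ]
      simp [Matrix.trace, Matrix.diag, Matrix.mul_apply]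
    have hnn : ∀ k ∈ (Finset.univ : Finset (Fin d)), 0 ≤ ∑ l, (A ^ m) k l * A l k :=
      fun k _ => Finset.sum_nonneg fun l _ => mul_nonneg (hpow m k l) (hAnn l k)
    have houter : ∀ k ∈ (Finset.univ : Finset (Fin d)),
        (∑ l, (A ^ m) k l * A l k) = 0 := by
      have := htr0 (m + 1) hp
      rw [htr] at this
      exact (Finset.sum_eq_zero_iff_of_nonneg hnn).mp this
    have hinner := (Finset.sum_eq_zero_iff_of_nonneg
      (fun l (_ : l ∈ Finset.univ) => mul_nonneg (hpow m j l) (hAnn l j))).mp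
      (houter j (Finset.mem_univ j))
    simpa using hinner i (Finset.mem_univ i)
  -- gradh entries nonneg
  have hgnn : ∀ i j, 0 ≤ gradh c A i j := by
    intro i j
    rw [gradh, Matrix.sum_apply]
    refine Finset.sum_nonneg fun p hp => ?_
    simp only [Matrix.smul_apply, Matrix.transpose_apply, smul_eq_mul]
    exact mul_nonneg (mul_nonneg (Nat.cast_nonneg p) (hc p hp).le) (hpow _ _ _)
  -- gradh i j * A i j = 0
  have hgA0 : ∀ i j, gradh c A i j * A i j = 0 := by
    intro i j
    rw [gradh, Matrix.sum_apply, Finset.sum_mul]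
    refine Finset.sum_eq_zero fun p hp => ?_
    simp only [Matrix.smul_apply, Matrix.transpose_apply, smul_eq_mul]
    rw [mul_assoc, hprod p hp i j, mul_zero]
  have hzero : ∀ q : Fin d × Fin d, 0 < gradh c A q.1 q.2 →
      Wp q.1 q.2 = 0 ∧ Wm q.1 q.2 = 0 := by
    intro q hq
    have hA0 : A q.1 q.2 = 0 := by
      have := hgA0 q.1 q.2
      rcases mul_eq_zero.mp this with h | h
      · exact absurd h hq.ne'
      · exact h
    have : Wp q.1 q.2 + Wm q.1 q.2 = 0 := hA0
    constructor
    · linarith [hWp q.1 q.2, hWm q.1 q.2]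
    · linarith [hWp q.1 q.2, hWm q.1 q.2]
  -- decomposition
  have hdecomp : gradh c A =
      ∑ q : Fin d × Fin d, (gradh c A q.1 q.2) • Matrix.single q.1 q.2 (1 : ℝ) := by
    ext i j
    rw [Matrix.sum_apply]
    simp only [Matrix.smul_apply, Matrix.single, Matrix.of_apply, smul_eq_mul,
      mul_ite, mul_one, mul_zero]
    rw [Fintype.sum_prod_type]
    rw [Finset.sum_eq_single i]
    · rw [Finset.sum_eq_single j]
      · simp
      · intro b _ hb; simp [hb]
      · simp
    · intro b _ hb
      apply Finset.sum_eq_zero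
      intro k _
      simp [hb]
    · simp
  refine ⟨⟨fun q => gradh c A q.1 q.2, fun q => hgnn q.1 q.2, ?_, hzero, hdecomp⟩, ?_⟩
  · intro q hq
    exact lt_of_le_of_ne (hgnn q.1 q.2) (Ne.symm hq)
  · -- linear dependence
    rw [Fintype.not_linearIndependent_iff]
    refine ⟨fun o => o.elim 1 (fun q => -(gradh c A q.1.1 q.1.2)), ?_, ⟨none, by simp⟩⟩
    rw [Fintype.sum_option]
    simp only [Option.elim, one_smul, neg_smul]
    have hsub : ∑ q : {q : Fin d × Fin d // 0 < gradh c A q.1 q.2},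
        (gradh c A q.1.1 q.1.2) • Matrix.single q.1.1 q.1.2 (1 : ℝ)
        = ∑ q : Fin d × Fin d, (gradh c A q.1 q.2) • Matrix.single q.1 q.2 (1 : ℝ) := by
      rw [← Finset.sum_subtype (Finset.univ.filter
        (fun q : Fin d × Fin d => 0 < gradh c A q.1 q.2))
        (by simp) (fun q : Fin d × Fin d =>
          (gradh c A q.1 q.2) • Matrix.single q.1 q.2 (1 : ℝ))]
      apply Finset.sum_subset (Finset.filter_subset _ _)
      intro q _ hq
      have : ¬ 0 < gradh c A q.1 q.2 := by simpa using hq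
      have h0 : gradh c A q.1 q.2 = 0 := le_antisymm (not_lt.mp this) (hgnn q.1 q.2)
      rw [h0, zero_smul]
    rw [Finset.sum_neg_distrib] -- maybe wrong name
    rw [hsub, ← hdecomp]
    abel
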